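/- Let A be a Banach algebra with a bounded net (e_v) such that (σ(e_v)) is a bounded approximate identity for A, where σ ∈ Hom(A) has dense range, and let X be a compact Hausdorff space. Then (the constant functions) 1_{σ(e_v)} form a bounded approximate identity for C(X,A). -/

import Mathlib

open Filter

theorem aux_bai9 {X A : Type*} [TopologicalSpace X] [CompactSpace X]
    [NonUnitalNormedRing A]
    {ι : Type*} [Nonempty ι] [Preorder ι] [IsDirected ι (· ≤ ·)]
    (T : ι → A → A) (C : ℝ) (hC0 : 0 ≤ C)
    (hC : ∀ v b c, dist (T v b) (T v c) ≤ C * dist b c)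
    (hT : ∀ b : A, Tendsto (fun v => T v b) atTop (nhds b))
    (f : C(X, A)) (F : ι → C(X, A)) (hF : ∀ v x, F v x = T v (f x)) :
    Tendsto F atTop (nhds f) := by
  rw [Metric.tendsto_nhds]
  intro ε hε
  set δ := ε / (C + 3) with hδdef
  have hδ : 0 < δ := div_pos hε (by linarith)
  have hK : TotallyBounded (Set.range f) := (isCompact_range f.continuous).totallyBounded
  obtain ⟨t, htfin, htsub⟩ := Metric.totallyBounded_iff.1 hK δ hδ
  have hev : ∀ᶠ v in atTop, ∀ y ∈ t, dist (T v y) y < δ := by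
    rw [eventually_all_finite htfin]
    intro y _
    exact (Metric.tendsto_nhds.1 (hT y)) δ hδ
  filter_upwards [hev] with v hv
  rw [ContinuousMap.dist_lt_iff hε]
  intro x
  obtain ⟨y, hy, hxy⟩ := Set.mem_iUnion₂.1 (htsub (Set.mem_range_self x))
  rw [Metric.mem_ball] at hxy
  have h1 : dist (F v x) (f x) ≤ dist (T v (f x)) (T v y) + dist (T v y) y + dist y (f x) := by
    rw [hF]
    exact dist_triangle4 _ _ _ _
  have h2 : dist (T v (f x)) (T v y) ≤ C * δ :=
    (hC v _ _).trans (by nlinarith [hxy, dist_nonneg (x := f x) (y := y)])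
  have h3 : dist (T v y) y < δ := hv y hy
  have h4 : dist y (f x) < δ := by rw [dist_comm]; exact hxy
  have hεeq : ε = (C + 3) * δ := by rw [hδdef, mul_div_assoc', eq_div_iff (by linarith), mul_comm]
  calc dist (F v x) (f x) ≤ C * δ + δ + δ := by linarith
    _ < ε := by rw [hεeq]; linarith

/-- if `(e_v)` is a bounded net in `A` such that `(σ(e_v))` is a
bounded approximate identity for `A`, where `σ ∈ Hom(A)` has dense range, then
the constant functions `1_{σ(e_v)}` form a bounded approximate identity for
`C(X,A)`. -/
theorem stmt9 {X A : Type*} [TopologicalSpace X] [CompactSpace X] [T2Space X]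
    [NonUnitalNormedRing A] [NormedSpace ℂ A] [IsScalarTower ℂ A A]
    [SMulCommClass ℂ A A] [CompleteSpace A]
    (σ : A →L[ℂ] A) (hσ : ∀ a b : A, σ (a * b) = σ a * σ b)
    (hdense : DenseRange σ)
    {ι : Type*} [Nonempty ι] [Preorder ι] [IsDirected ι (· ≤ ·)]
    (e : ι → A) (hbdd : ∃ M : ℝ, ∀ v, ‖e v‖ ≤ M)
    (hbai : ∀ a : A, Tendsto (fun v => σ (e v) * a) atTop (nhds a) ∧
      Tendsto (fun v => a * σ (e v)) atTop (nhds a)) :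
    (∃ M : ℝ, ∀ v, ‖(ContinuousMap.const X (σ (e v)) : C(X, A))‖ ≤ M) ∧
    ∀ f : C(X, A),
      Tendsto (fun v => (ContinuousMap.const X (σ (e v)) : C(X, A)) * f) atTop (nhds f) ∧
      Tendsto (fun v => f * (ContinuousMap.const X (σ (e v)) : C(X, A))) atTop (nhds f) := by
  obtain ⟨M, hM⟩ := hbdd
  have hMnn : 0 ≤ M := le_trans (norm_nonneg _) (hM (Classical.arbitrary ι))
  set C := ‖σ‖ * M with hCdef
  have hC0 : 0 ≤ C := mul_nonneg (norm_nonneg _) hMnn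
  have hub : ∀ v, ‖σ (e v)‖ ≤ C := fun v =>
    (σ.le_opNorm (e v)).trans (mul_le_mul_of_nonneg_left (hM v) (norm_nonneg _))
  constructor
  · refine ⟨C, fun v => ?_⟩
    rw [ContinuousMap.norm_le _ hC0]
    intro x
    exact hub v
  · intro f
    constructor
    · refine aux_bai9 (fun v b => σ (e v) * b) C hC0 (fun v b c => ?_) (fun b => (hbai b).1)
        f _ (fun v x => rfl)
      rw [dist_eq_norm, dist_eq_norm, ← mul_sub]
      exact (norm_mul_le _ _).trans (by gcongr; exact hub v)
    · refine aux_bai9 (fun v b => b * σ (e v)) C hC0 (fun v b c => ?_) (fun b => (hbai b).2)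
        f _ (fun v x => rfl)
      rw [dist_eq_norm, dist_eq_norm, ← sub_mul]
      rw [mul_comm C]
      exact (norm_mul_le _ _).trans (by gcongr; exact hub v)
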